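/- arXiv:2011.12583 — 4 statements merged into one kernel-verified Lean document; each statement's English description precedes it below -/
import Mathlib

section
/- Let ℓ ≥ 2 and let (A_n)_{n∈ℕ} be a sequence of invertible ℓ×ℓ complex matrices such that |det(A_n)| → ∞ as n → ∞. Then there exist indices i, j ∈ Fin ℓ and a strictly increasing function φ : ℕ → ℕ such that the absolute value of the (i,j)-minor of A_{φ(n)} tends to infinity as n → ∞. -/
/-- If `(A n)` is a sequence of invertible `(m+1) × (m+1)` complex matrices (with `m + 1 ≥ 2`,
i.e. `1 ≤ m`) whose determinants diverge in absolute value, then there are indices `i j` and a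
strictly increasing `φ : ℕ → ℕ` such that the `(i,j)`-minor of `A (φ n)` diverges in absolute
value. -/
theorem minors_diverge_of_det_diverges (m : ℕ) (hm : 1 ≤ m)
    (A : ℕ → Matrix (Fin (m + 1)) (Fin (m + 1)) ℂ)
    (hinv : ∀ n, IsUnit (A n))
    (hdet : Filter.Tendsto (fun n => ‖(A n).det‖) Filter.atTop Filter.atTop) :
    ∃ (i j : Fin (m + 1)) (φ : ℕ → ℕ), StrictMono φ ∧
      Filter.Tendsto
        (fun n => ‖((A (φ n)).submatrix i.succAbove j.succAbove).det‖)
        Filter.atTop Filter.atTop := by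
  classical
  set f : Fin (m + 1) × Fin (m + 1) → ℕ → ℝ :=
    fun p n => ‖((A n).submatrix p.1.succAbove p.2.succAbove).det‖ with hf
  have hne : (Finset.univ : Finset (Fin (m + 1) × Fin (m + 1))).Nonempty := Finset.univ_nonempty
  set g : ℕ → ℝ := fun n => Finset.univ.sup' hne (fun p => f p n) with hg
  have hg0 : ∀ n, 0 ≤ g n := by
    intro n
    refine le_trans (norm_nonneg _) (Finset.le_sup' (fun p => f p n)
      (Finset.mem_univ ((0 : Fin (m+1)), (0 : Fin (m+1)))))
  -- the max of minors tends to infinity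
  have hgtop : Filter.Tendsto g Filter.atTop Filter.atTop := by
    rw [Filter.tendsto_atTop]
    intro b
    set b' : ℝ := max b 0 with hb'
    have hb'0 : 0 ≤ b' := le_max_right _ _
    have hpow : Filter.Tendsto (fun n => ‖(A n).det‖ ^ m) Filter.atTop Filter.atTop :=
      (Filter.tendsto_pow_atTop (Nat.one_le_iff_ne_zero.mp hm)).comp hdet
    filter_upwards [hpow.eventually_ge_atTop ((m + 1).factorial • b' ^ (m + 1))] with n hn
    -- bound the determinant of the adjugate
    have hbound : ∀ i j, ‖(A n).adjugate i j‖ ≤ g n := by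
      intro i j
      rw [Matrix.adjugate_fin_succ_eq_det_submatrix]
      rw [norm_mul, norm_pow, norm_neg, norm_one, one_pow, one_mul]
      exact Finset.le_sup' (fun p => f p n) (Finset.mem_univ (j, i))
    have hdetadj : ‖((A n).adjugate).det‖ ≤ (m + 1).factorial • g n ^ (m + 1) := by
      have := Matrix.det_le (A := (A n).adjugate) (abv := NormedField.toAbsoluteValue ℂ) (x := g n) hbound
      simp only [Fintype.card_fin, nsmul_eq_mul] at this ⊢
      exact this
    have hadj : ‖((A n).adjugate).det‖ = ‖(A n).det‖ ^ m := by
      rw [Matrix.det_adjugate, norm_pow, Fintype.card_fin]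
      norm_num
    rw [hadj] at hdetadj
    have h1 : (m + 1).factorial • b' ^ (m + 1) ≤ (m + 1).factorial • g n ^ (m + 1) :=
      le_trans hn hdetadj
    have h2 : b' ^ (m + 1) ≤ g n ^ (m + 1) := by
      have hfac : (0 : ℝ) < (m + 1).factorial := by positivity
      rw [nsmul_eq_mul, nsmul_eq_mul] at h1
      exact le_of_mul_le_mul_left h1 hfac
    have h3 : b' ≤ g n := by
      by_contra hc
      push_neg at hc
      exact absurd h2 (not_le.mpr (pow_lt_pow_left₀ hc (hg0 n) (Nat.succ_ne_zero m)))
    exact le_trans (le_max_left b 0) h3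
  -- pigeonhole: some pair attains the max frequently
  have hfreq : ∃ p : Fin (m + 1) × Fin (m + 1), ∃ᶠ n in Filter.atTop, f p n = g n := by
    by_contra hc
    push_neg at hc
    have hall : ∀ᶠ n in Filter.atTop, ∀ p : Fin (m + 1) × Fin (m + 1), ¬ f p n = g n :=
      Filter.eventually_all.mpr fun p => hc p
    obtain ⟨n, hn⟩ := hall.exists
    obtain ⟨p, -, hp⟩ := Finset.exists_mem_eq_sup' hne (fun p => f p n)
    exact hn p hp.symm
  obtain ⟨p, hp⟩ := hfreq
  obtain ⟨φ, hφ, hφeq⟩ := Filter.extraction_of_frequently_atTop hp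
  refine ⟨p.1, p.2, φ, hφ, ?_⟩
  have : Filter.Tendsto (fun n => g (φ n)) Filter.atTop Filter.atTop :=
    hgtop.comp hφ.tendsto_atTop
  refine this.congr fun n => (hφeq n).symm
end

section
/- Let p ≥ 1, let ε > 0 be a real number, and let A be a p×p complex matrix such that ‖A·v‖ ≥ ε for every vector v ∈ ℂ^p with ‖v‖ = 1, where ‖·‖ is the Euclidean (hermitian) norm on ℂ^p. Then for every v ∈ ℂ^p one has ε^{p−1} · ‖A·v‖ ≤ |det(A)| · ‖v‖ (equivalently, ε^{p−1} · ‖A‖ ≤ |det(A)| where ‖A‖ is the operator norm of A with respect to the Euclidean norm). -/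
open Matrix

private lemma aux_norm_sq_eq_re_inner (p : ℕ) (A : Matrix (Fin p) (Fin p) ℂ)
    (x : EuclideanSpace ℂ (Fin p)) :
    ‖(EuclideanSpace.equiv (Fin p) ℂ).symm (A.mulVec ((EuclideanSpace.equiv (Fin p) ℂ) x))‖ ^ 2
      = Complex.re (inner ℂ x (Matrix.toEuclideanLin (Aᴴ * A) x)) := by
  have h1 : (inner ℂ x (Matrix.toEuclideanLin (Aᴴ * A) x) : ℂ)
      = dotProduct (star (A.mulVec (WithLp.equiv 2 _ x))) (A.mulVec (WithLp.equiv 2 _ x)) := by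
    rw [EuclideanSpace.inner_eq_star_dotProduct, Matrix.piLp_ofLp_toEuclideanLin,
      Matrix.toLin'_apply, ← Matrix.mulVec_mulVec, dotProduct_comm, Matrix.dotProduct_mulVec, ← Matrix.star_mulVec]
    rfl
  have h2 : (inner ℂ ((EuclideanSpace.equiv (Fin p) ℂ).symm (A.mulVec ((EuclideanSpace.equiv (Fin p) ℂ) x)))
      ((EuclideanSpace.equiv (Fin p) ℂ).symm (A.mulVec ((EuclideanSpace.equiv (Fin p) ℂ) x))) : ℂ)
      = dotProduct (star (A.mulVec (WithLp.equiv 2 _ x))) (A.mulVec (WithLp.equiv 2 _ x)) := by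
    rw [EuclideanSpace.inner_eq_star_dotProduct, dotProduct_comm]; rfl
  rw [h1, ← h2, inner_self_eq_norm_sq_to_K]
  norm_cast

/-- If every Euclidean-unit vector `v` satisfies `‖A v‖ ≥ ε`, then
`ε ^ (p - 1) * ‖A v‖ ≤ |det A| * ‖v‖` for every `v`. -/
theorem det_lower_bound_euclidean (p : ℕ) (hp : 1 ≤ p) (ε : ℝ) (hε : 0 < ε)
    (A : Matrix (Fin p) (Fin p) ℂ)
    (hA : ∀ v : EuclideanSpace ℂ (Fin p), ‖v‖ = 1 →
      ε ≤ ‖(EuclideanSpace.equiv (Fin p) ℂ).symm (A.mulVec ((EuclideanSpace.equiv (Fin p) ℂ) v))‖) :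
    ∀ v : EuclideanSpace ℂ (Fin p),
      ε ^ (p - 1) *
          ‖(EuclideanSpace.equiv (Fin p) ℂ).symm (A.mulVec ((EuclideanSpace.equiv (Fin p) ℂ) v))‖
        ≤ ‖A.det‖ * ‖v‖ := by
  intro v
  have hB : (Aᴴ * A).IsHermitian := Matrix.isHermitian_conjTranspose_mul_self A
  set μ : Fin p → ℝ := hB.eigenvalues with hμ
  set u : OrthonormalBasis (Fin p) ℂ (EuclideanSpace ℂ (Fin p)) := hB.eigenvectorBasis with hu
  set T : EuclideanSpace ℂ (Fin p) →ₗ[ℂ] EuclideanSpace ℂ (Fin p) :=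
    Matrix.toEuclideanLin (Aᴴ * A) with hT
  -- T (u i) = μ i • u i
  have hTu : ∀ i, T (u i) = (μ i : ℂ) • u i := by
    intro i
    have := hB.mulVec_eigenvectorBasis i
    apply (WithLp.equiv 2 (Fin p → ℂ)).injective
    simpa [hT, Matrix.piLp_ofLp_toEuclideanLin, Matrix.toLin'_apply, Complex.real_smul] using this
  -- eigenvalues are ≥ ε^2
  have hμε : ∀ i, ε ^ 2 ≤ μ i := by
    intro i
    have hnorm : ‖u i‖ = 1 := u.orthonormal.1 i
    have h1 := hA (u i) hnorm
    have h2 : ‖(EuclideanSpace.equiv (Fin p) ℂ).symm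
        (A.mulVec ((EuclideanSpace.equiv (Fin p) ℂ) (u i)))‖ ^ 2 = μ i := by
      rw [aux_norm_sq_eq_re_inner, ← hT, hTu i, inner_smul_right, inner_self_eq_norm_sq_to_K,
        hnorm]
      simp
    calc ε ^ 2 ≤ ‖(EuclideanSpace.equiv (Fin p) ℂ).symm
          (A.mulVec ((EuclideanSpace.equiv (Fin p) ℂ) (u i)))‖ ^ 2 := by
          exact pow_le_pow_left₀ hε.le h1 2
      _ = μ i := h2
  have hμ0 : ∀ i, 0 < μ i := fun i => lt_of_lt_of_le (by positivity) (hμε i)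
  -- |det A|^2 = ∏ μ i
  have hdet : ‖A.det‖ ^ 2 = ∏ i, μ i := by
    have h1 : (Aᴴ * A).det = ∏ i, (μ i : ℂ) := hB.det_eq_prod_eigenvalues
    have h2 : (Aᴴ * A).det = (starRingEnd ℂ) A.det * A.det := by
      rw [Matrix.det_mul, Matrix.det_conjTranspose]; rfl
    have h3 : ((‖A.det‖ ^ 2 : ℝ) : ℂ) = ((∏ i, μ i : ℝ) : ℂ) := by
      push_cast
      rw [← Complex.conj_mul', ← h2, h1]
    exact Complex.ofReal_inj.mp h3
  -- coefficient identity
  have hrepr : ∀ i, u.repr (T v) i = (μ i : ℂ) * u.repr v i := by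
    intro i
    rw [u.repr_apply_apply, u.repr_apply_apply,
      ← (Matrix.isHermitian_iff_isSymmetric.mp hB) (u i) v, hTu i, inner_smul_left]
    simp [Complex.conj_ofReal]
  -- ‖Av‖^2 = Σ μ i * normSq (coeff i)
  have hAv : ‖(EuclideanSpace.equiv (Fin p) ℂ).symm
      (A.mulVec ((EuclideanSpace.equiv (Fin p) ℂ) v))‖ ^ 2
      = ∑ i, μ i * Complex.normSq (u.repr v i) := by
    rw [aux_norm_sq_eq_re_inner, ← hT]
    have h4 : (inner ℂ v (T v) : ℂ) = inner ℂ (u.repr v) (u.repr (T v)) :=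
      (u.repr.inner_map_map v (T v)).symm
    rw [h4, PiLp.inner_apply]
    simp only [RCLike.inner_apply, hrepr]
    rw [Complex.re_sum]
    refine Finset.sum_congr rfl fun i _ => ?_
    have h5 : (starRingEnd ℂ) (u.repr v i) * ((μ i : ℂ) * u.repr v i)
        = ((μ i * Complex.normSq (u.repr v i) : ℝ) : ℂ) := by
      push_cast
      rw [← Complex.mul_conj]
      ring
    rw [mul_comm, h5, Complex.ofReal_re]
  -- ‖v‖^2 = Σ normSq (coeff i)
  have hv : ‖v‖ ^ 2 = ∑ i, Complex.normSq (u.repr v i) := by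
    have h5 : (inner ℂ (u.repr v) (u.repr v) : ℂ) = ((‖v‖ : ℂ)) ^ 2 := by
      rw [u.repr.inner_map_map, inner_self_eq_norm_sq_to_K]
      rfl
    rw [PiLp.inner_apply] at h5
    simp only [RCLike.inner_apply] at h5
    have h6 := congrArg Complex.re h5
    rw [Complex.re_sum] at h6
    have h7 : ((‖v‖ : ℂ) ^ 2).re = ‖v‖ ^ 2 := by norm_cast
    rw [h7] at h6
    rw [← h6]
    refine Finset.sum_congr rfl fun i _ => ?_
    rw [mul_comm, ← Complex.normSq_eq_conj_mul_self, Complex.ofReal_re]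
  -- termwise bound
  have key : ∀ i, (ε ^ 2) ^ (p - 1) * μ i ≤ ∏ j, μ j := by
    intro i
    have h1 : ∏ _j ∈ Finset.univ.erase i, (ε ^ 2) ≤ ∏ j ∈ Finset.univ.erase i, μ j :=
      Finset.prod_le_prod (fun j _ => by positivity) (fun j _ => hμε j)
    have h2 : (Finset.univ.erase i).card = p - 1 := by
      rw [Finset.card_erase_of_mem (Finset.mem_univ i), Finset.card_univ, Fintype.card_fin]
    calc (ε ^ 2) ^ (p - 1) * μ i = (∏ _j ∈ Finset.univ.erase i, (ε ^ 2)) * μ i := by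
          rw [Finset.prod_const, h2]
      _ ≤ (∏ j ∈ Finset.univ.erase i, μ j) * μ i :=
          mul_le_mul_of_nonneg_right h1 (hμ0 i).le
      _ = ∏ j, μ j := by
          rw [mul_comm, Finset.mul_prod_erase _ _ (Finset.mem_univ i)]
  -- square comparison
  have main : (ε ^ (p - 1)) ^ 2 * (‖(EuclideanSpace.equiv (Fin p) ℂ).symm
      (A.mulVec ((EuclideanSpace.equiv (Fin p) ℂ) v))‖) ^ 2
      ≤ (‖A.det‖) ^ 2 * ‖v‖ ^ 2 := by
    rw [hAv, hv, hdet, Finset.mul_sum, Finset.mul_sum]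
    refine Finset.sum_le_sum fun i _ => ?_
    have h6 : (ε ^ (p - 1)) ^ 2 * (μ i * Complex.normSq (u.repr v i))
        = ((ε ^ 2) ^ (p - 1) * μ i) * Complex.normSq (u.repr v i) := by ring
    rw [h6]
    exact mul_le_mul_of_nonneg_right (key i) (Complex.normSq_nonneg _)
  have h0l : 0 ≤ ε ^ (p - 1) * ‖(EuclideanSpace.equiv (Fin p) ℂ).symm
      (A.mulVec ((EuclideanSpace.equiv (Fin p) ℂ) v))‖ := by positivity
  have h0r : 0 ≤ ‖A.det‖ * ‖v‖ := by positivity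
  nlinarith [main, h0l, h0r]
end

section
/- Let p ≥ 2, let m > 0 be a real number, and let (B_n)_{n∈ℕ} be a sequence of p×p complex matrices such that |det(B_n)| ≥ m for every n and such that the last column of B_n converges to the zero vector as n → ∞. Then there exist an index i ∈ Fin p and a strictly increasing function φ : ℕ → ℕ such that the absolute value of the minor of B_{φ(n)} obtained by deleting row i and the last column tends to infinity as n → ∞. -/
open Filter


/-- If `(B n)` is a sequence of `(q+2) × (q+2)` complex matrices (size `p = q + 2 ≥ 2`) with
`|det (B n)| ≥ m > 0` and whose last column tends to `0`, then some fixed minor obtained by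
deleting a row `i` and the last column diverges in absolute value along a subsequence. -/
theorem minor_diverges_of_last_col_small (q : ℕ) (m : ℝ) (hm : 0 < m)
    (B : ℕ → Matrix (Fin (q + 2)) (Fin (q + 2)) ℂ)
    (hdet : ∀ n, m ≤ ‖(B n).det‖)
    (hcol : ∀ i : Fin (q + 2),
      Filter.Tendsto (fun n => B n i (Fin.last (q + 1))) Filter.atTop (nhds 0)) :
    ∃ (i : Fin (q + 2)) (φ : ℕ → ℕ), StrictMono φ ∧
      Filter.Tendsto
        (fun n =>
          ‖((B (φ n)).submatrix i.succAbove (Fin.last (q + 1)).succAbove).det‖)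
        Filter.atTop Filter.atTop := by
  set j : Fin (q + 2) := Fin.last (q + 1) with hj
  set c : ℕ → Fin (q + 2) → ℝ := fun n i =>
    ‖((B n).submatrix i.succAbove j.succAbove).det‖ with hc
  set S : ℕ → ℝ := fun n => ∑ i, ‖B n i j‖ with hS
  set M : ℕ → ℝ := fun n => Finset.univ.sup' Finset.univ_nonempty (c n) with hM
  have key : ∀ n, m ≤ S n * M n := by
    intro n
    have hlap := Matrix.det_succ_column (B n) j
    have h1 : ‖(B n).det‖ ≤ ∑ i, ‖B n i j‖ * c n i := by
      rw [hlap]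
      refine (norm_sum_le _ _).trans ?_
      refine Finset.sum_le_sum fun i _ => le_of_eq ?_
      rw [norm_mul, norm_mul, norm_pow, norm_neg, norm_one, one_pow, one_mul]
    have h2 : ∑ i, ‖B n i j‖ * c n i ≤ ∑ i, ‖B n i j‖ * M n := by
      refine Finset.sum_le_sum fun i _ => ?_
      exact mul_le_mul_of_nonneg_left (Finset.le_sup' (c n) (Finset.mem_univ i))
        (norm_nonneg _)
    calc m ≤ ‖(B n).det‖ := hdet n
      _ ≤ ∑ i, ‖B n i j‖ * c n i := h1
      _ ≤ ∑ i, ‖B n i j‖ * M n := h2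
      _ = S n * M n := by rw [Finset.sum_mul]
  have hSnonneg : ∀ n, 0 ≤ S n := fun n =>
    Finset.sum_nonneg fun i _ => norm_nonneg _
  have hS0 : Tendsto S atTop (nhds 0) := by
    have : Tendsto (fun n => ∑ i : Fin (q + 2), ‖B n i j‖) atTop
        (nhds (∑ _i : Fin (q + 2), (0:ℝ))) :=
      tendsto_finset_sum _ fun i _ => by
        simpa [Function.comp_def] using (continuous_norm.tendsto 0).comp (hcol i)
    simpa using this
  have hMtop : Tendsto M atTop atTop := by
    rw [tendsto_atTop]
    intro C
    have hC1 : (0:ℝ) < max C 1 := lt_of_lt_of_le one_pos (le_max_right _ _)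
    have hev : ∀ᶠ n in atTop, S n < m / max C 1 := by
      have := hS0.eventually (eventually_lt_nhds (show (0:ℝ) < m / max C 1 from div_pos hm hC1))
      simpa using this
    filter_upwards [hev] with n hn
    have hkey := key n
    have hMpos : 0 < M n := by
      by_contra h
      push_neg at h
      have : S n * M n ≤ 0 := mul_nonpos_of_nonneg_of_nonpos (hSnonneg n) h
      linarith
    have h3 : S n * M n < (m / max C 1) * M n := mul_lt_mul_of_pos_right hn hMpos
    have h4 : m < (m / max C 1) * M n := lt_of_le_of_lt hkey h3
    have h5 : max C 1 < M n := by
      have hd : (m / max C 1) * max C 1 = m := div_mul_cancel₀ m (ne_of_gt hC1)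
      nlinarith [div_pos hm hC1]
    exact le_of_lt (lt_of_le_of_lt (le_max_left _ _) h5)
  have hargmax : ∀ n, ∃ i : Fin (q + 2), M n = c n i := fun n => by
    obtain ⟨i, _, hi⟩ := Finset.exists_mem_eq_sup' Finset.univ_nonempty (c n)
    exact ⟨i, hi⟩
  choose f hf using hargmax
  obtain ⟨i, hi⟩ := Finite.exists_infinite_fiber f
  have hfreq : ∃ᶠ n in atTop, f n = i := by
    rw [Nat.frequently_atTop_iff_infinite]
    rw [Set.infinite_coe_iff] at hi
    exact hi
  obtain ⟨φ, hφ, hφi⟩ := Filter.extraction_of_frequently_atTop hfreq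
  refine ⟨i, φ, hφ, ?_⟩
  have htop : Tendsto (fun n => M (φ n)) atTop atTop := hMtop.comp hφ.tendsto_atTop
  refine htop.congr fun n => ?_
  rw [hf (φ n), hφi n]
end

section
/- Let p ≥ 1 and let (A_n)_{n∈ℕ} be a sequence of p×p complex matrices such that the operator norms ‖A_n‖ (with respect to the Euclidean norm on ℂ^p) tend to infinity and such that the sequence (|det(A_n)|)_{n∈ℕ} is bounded above. Then there exist a strictly increasing function φ : ℕ → ℕ, a sequence of vectors v_n ∈ ℂ^p with ‖v_n‖ = 1, and a vector v ∈ ℂ^p with ‖v‖ = 1, such that v_n → v and ‖A_{φ(n)} · v_n‖ → 0 as n → ∞. -/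
open Filter Matrix

set_option maxHeartbeats 1000000
set_option synthInstance.maxHeartbeats 400000

section Aux

variable {p : ℕ}

private lemma norm_sq_apply (A : Matrix (Fin p) (Fin p) ℂ) (x : EuclideanSpace ℂ (Fin p)) :
    ‖Matrix.toEuclideanCLM (𝕜 := ℂ) A x‖ ^ 2 =
      RCLike.re (dotProduct (star (WithLp.equiv 2 _ x))
        ((Aᴴ * A) *ᵥ (WithLp.equiv 2 _ x))) := by
  set y := WithLp.equiv 2 _ x with hy
  have hx : x = (WithLp.equiv 2 _).symm y := (Equiv.symm_apply_apply _ _).symm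
  have h1 : ‖Matrix.toEuclideanCLM (𝕜 := ℂ) A x‖ ^ 2
      = RCLike.re (dotProduct (star (A *ᵥ y)) (A *ᵥ y)) := by
    rw [← inner_self_eq_norm_sq (𝕜 := ℂ), EuclideanSpace.inner_eq_star_dotProduct,
      dotProduct_comm]; rfl
  have h2 : dotProduct (star y) ((Aᴴ * A) *ᵥ y)
      = dotProduct (star (A *ᵥ y)) (A *ᵥ y) := by
    rw [← Matrix.mulVec_mulVec, Matrix.dotProduct_mulVec, ← Matrix.star_mulVec]
  rw [h1, h2]

private lemma norm_apply_eigenvector (A : Matrix (Fin p) (Fin p) ℂ) (i : Fin p) :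
    ‖Matrix.toEuclideanCLM (𝕜 := ℂ) A
        ((Matrix.isHermitian_conjTranspose_mul_self A).eigenvectorBasis i)‖ ^ 2 =
      (Matrix.isHermitian_conjTranspose_mul_self A).eigenvalues i := by
  rw [norm_sq_apply]
  exact ((Matrix.isHermitian_conjTranspose_mul_self A).eigenvalues_eq i).symm

private lemma opNorm_sq_le [NeZero p] (A : Matrix (Fin p) (Fin p) ℂ) {μ : ℝ} (hμ0 : 0 ≤ μ)
    (hμ : ∀ i, (Matrix.isHermitian_conjTranspose_mul_self A).eigenvalues i ≤ μ) :
    ‖Matrix.toEuclideanCLM (𝕜 := ℂ) A‖ ^ 2 ≤ μ := by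
  set hB := Matrix.isHermitian_conjTranspose_mul_self A
  set T := Matrix.toEuclideanCLM (𝕜 := ℂ) A with hT
  have hlam0 : ∀ i, 0 ≤ hB.eigenvalues i := fun i =>
    Matrix.eigenvalues_conjTranspose_mul_self_nonneg A i
  -- norm of the diagonal part
  have hD : ‖Matrix.toEuclideanCLM (𝕜 := ℂ)
      (Matrix.diagonal (RCLike.ofReal ∘ hB.eigenvalues))‖ ≤ μ := by
    apply ContinuousLinearMap.opNorm_le_bound _ hμ0
    intro x
    set y := WithLp.equiv 2 _ x with hy
    have hx : x = (WithLp.equiv 2 _).symm y := (Equiv.symm_apply_apply _ _).symm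
    rw [hx, WithLp.equiv_symm_apply, Matrix.toEuclideanCLM_toLp]
    rw [EuclideanSpace.norm_eq, EuclideanSpace.norm_eq]
    have hcoord : ∀ i, ‖((WithLp.equiv 2 _).symm
        ((Matrix.diagonal (RCLike.ofReal ∘ hB.eigenvalues)) *ᵥ y) :
          EuclideanSpace ℂ (Fin p)) i‖ ^ 2 ≤ μ ^ 2 *
          ‖((WithLp.equiv 2 _).symm y : EuclideanSpace ℂ (Fin p)) i‖ ^ 2 := by
      intro i
      have : ((WithLp.equiv 2 _).symm
          ((Matrix.diagonal (RCLike.ofReal ∘ hB.eigenvalues)) *ᵥ y) :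
            EuclideanSpace ℂ (Fin p)) i = (hB.eigenvalues i : ℂ) * y i := by
        simp [Matrix.mulVec_diagonal]
      rw [this]
      have h2 : ‖(hB.eigenvalues i : ℂ)‖ ≤ μ := by
        rw [Complex.norm_real, Real.norm_eq_abs, abs_of_nonneg (hlam0 i)]
        exact hμ i
      calc ‖(hB.eigenvalues i : ℂ) * y i‖ ^ 2
          = ‖(hB.eigenvalues i : ℂ)‖ ^ 2 * ‖y i‖ ^ 2 := by rw [norm_mul]; ring
        _ ≤ μ ^ 2 * ‖y i‖ ^ 2 := by
            have := mul_le_mul h2 h2 (norm_nonneg _) hμ0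
            nlinarith [norm_nonneg (y i), norm_nonneg ((hB.eigenvalues i : ℂ))]
    calc √(∑ i, ‖((WithLp.equiv 2 _).symm
          ((Matrix.diagonal (RCLike.ofReal ∘ hB.eigenvalues)) *ᵥ y) :
            EuclideanSpace ℂ (Fin p)) i‖ ^ 2)
        ≤ √(∑ i, μ ^ 2 * ‖((WithLp.equiv 2 _).symm y : EuclideanSpace ℂ (Fin p)) i‖ ^ 2) :=
          Real.sqrt_le_sqrt (Finset.sum_le_sum fun i _ => hcoord i)
      _ = μ * √(∑ i, ‖((WithLp.equiv 2 _).symm y : EuclideanSpace ℂ (Fin p)) i‖ ^ 2) := by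
          rw [← Finset.mul_sum, Real.sqrt_mul (sq_nonneg μ), Real.sqrt_sq hμ0]
  -- unitary part
  set V : Matrix (Fin p) (Fin p) ℂ := (hB.eigenvectorUnitary : Matrix (Fin p) (Fin p) ℂ) with hV
  set W := Matrix.toEuclideanCLM (𝕜 := ℂ) V with hW
  have hVu : V ∈ unitary (Matrix (Fin p) (Fin p) ℂ) := hB.eigenvectorUnitary.2
  have hWstar : star W * W = 1 := by
    rw [hW, ← map_star, ← _root_.map_mul, (Unitary.mem_iff.mp hVu).1, _root_.map_one]
  have hWnorm : ‖W‖ = 1 := by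
    have h1 : ‖star W * W‖ = ‖W‖ * ‖W‖ := by
      rw [ContinuousLinearMap.star_eq_adjoint]
      exact ContinuousLinearMap.norm_adjoint_comp_self W
    rw [hWstar] at h1
    have h2 : ‖(1 : EuclideanSpace ℂ (Fin p) →L[ℂ] EuclideanSpace ℂ (Fin p))‖ = 1 := by
      rw [ContinuousLinearMap.one_def, ContinuousLinearMap.norm_id]
    rw [h2] at h1
    nlinarith [norm_nonneg W]
  have hWstarnorm : ‖star W‖ = 1 := by
    rw [ContinuousLinearMap.star_eq_adjoint]
    rw [show ‖ContinuousLinearMap.adjoint W‖ = ‖W‖ from ContinuousLinearMap.adjoint.norm_map W]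
    exact hWnorm
  -- assemble
  have hsq : ‖T‖ ^ 2 = ‖star T * T‖ := by
    rw [ContinuousLinearMap.star_eq_adjoint, pow_two]
    exact (ContinuousLinearMap.norm_adjoint_comp_self T).symm
  have hstar : star T * T = Matrix.toEuclideanCLM (𝕜 := ℂ) (Aᴴ * A) := by
    rw [hT, ← map_star, ← _root_.map_mul, Matrix.star_eq_conjTranspose]
  have hspec : Matrix.toEuclideanCLM (𝕜 := ℂ) (Aᴴ * A)
      = W * Matrix.toEuclideanCLM (𝕜 := ℂ)
          (Matrix.diagonal (RCLike.ofReal ∘ hB.eigenvalues)) * star W := by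
    conv_lhs => rw [hB.spectral_theorem, Unitary.conjStarAlgAut_apply]
    rw [_root_.map_mul, _root_.map_mul, map_star]
  rw [hsq, hstar, hspec]
  calc ‖W * Matrix.toEuclideanCLM (𝕜 := ℂ)
        (Matrix.diagonal (RCLike.ofReal ∘ hB.eigenvalues)) * star W‖
      ≤ ‖W * Matrix.toEuclideanCLM (𝕜 := ℂ)
        (Matrix.diagonal (RCLike.ofReal ∘ hB.eigenvalues))‖ * ‖star W‖ := norm_mul_le _ _
    _ ≤ (‖W‖ * ‖Matrix.toEuclideanCLM (𝕜 := ℂ)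
        (Matrix.diagonal (RCLike.ofReal ∘ hB.eigenvalues))‖) * ‖star W‖ := by
        gcongr; exact norm_mul_le _ _
    _ ≤ μ := by rw [hWnorm, hWstarnorm]; simpa using hD

end Aux

/-- If the Euclidean operator norms of a sequence of `p × p` complex matrices tend to infinity
while their determinants stay bounded in absolute value, then along a subsequence there are
Euclidean-unit vectors `v n`, converging to a unit vector `w`, that are almost annihilated:
`‖A (φ n) (v n)‖ → 0`. -/
theorem exists_unit_vectors_almost_annihilated (p : ℕ) (hp : 1 ≤ p)
    (A : ℕ → Matrix (Fin p) (Fin p) ℂ)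
    (hnorm : Tendsto (fun n => ‖Matrix.toEuclideanCLM (𝕜 := ℂ) (A n)‖) atTop atTop)
    (hdet : ∃ C : ℝ, ∀ n, ‖(A n).det‖ ≤ C) :
    ∃ (φ : ℕ → ℕ) (v : ℕ → EuclideanSpace ℂ (Fin p)) (w : EuclideanSpace ℂ (Fin p)),
      StrictMono φ ∧ (∀ n, ‖v n‖ = 1) ∧ ‖w‖ = 1 ∧
      Tendsto v atTop (nhds w) ∧
      Tendsto (fun n => ‖Matrix.toEuclideanCLM (𝕜 := ℂ) (A (φ n)) (v n)‖) atTop (nhds 0) := by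
  classical
  haveI : NeZero p := ⟨by omega⟩
  obtain ⟨C, hC⟩ := hdet
  have hC0 : 0 ≤ C := le_trans (norm_nonneg _) (hC 0)
  set T : ℕ → EuclideanSpace ℂ (Fin p) →L[ℂ] EuclideanSpace ℂ (Fin p) :=
    fun n => Matrix.toEuclideanCLM (𝕜 := ℂ) (A n) with hTdef
  set lam : ℕ → Fin p → ℝ :=
    fun n => (Matrix.isHermitian_conjTranspose_mul_self (A n)).eigenvalues with hlamdef
  have hlam0 : ∀ n i, 0 ≤ lam n i := fun n i =>
    Matrix.eigenvalues_conjTranspose_mul_self_nonneg (A n) i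
  have hne : (Finset.univ : Finset (Fin p)).Nonempty := Finset.univ_nonempty
  choose i₀ _ hmin using fun n => Finset.exists_min_image Finset.univ (lam n) hne
  choose i₁ _ hmax using fun n => Finset.exists_max_image Finset.univ (lam n) hne
  set μ : ℕ → ℝ := fun n => lam n (i₀ n) with hμdef
  have hμ0 : ∀ n, 0 ≤ μ n := fun n => hlam0 n (i₀ n)
  set u : ℕ → EuclideanSpace ℂ (Fin p) := fun n =>
    (Matrix.isHermitian_conjTranspose_mul_self (A n)).eigenvectorBasis (i₀ n) with hudef
  have hu1 : ∀ n, ‖u n‖ = 1 := fun n =>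
    (Matrix.isHermitian_conjTranspose_mul_self (A n)).eigenvectorBasis.orthonormal.1 (i₀ n)
  have huT : ∀ n, ‖T n (u n)‖ ^ 2 = μ n := fun n => norm_apply_eigenvector (A n) (i₀ n)
  -- determinant identity
  have hprod : ∀ n, ∏ i, lam n i = ‖(A n).det‖ ^ 2 := by
    intro n
    have h := (Matrix.isHermitian_conjTranspose_mul_self (A n)).det_eq_prod_eigenvalues
    have h1 : ‖((A n)ᴴ * (A n)).det‖ = ∏ i, lam n i := by
      rw [h, norm_prod]
      refine Finset.prod_congr rfl fun i _ => ?_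
      rw [RCLike.norm_ofReal, abs_of_nonneg (hlam0 n i)]
    have h2 : ‖((A n)ᴴ * (A n)).det‖ = ‖(A n).det‖ ^ 2 := by
      rw [Matrix.det_mul, Matrix.det_conjTranspose, norm_mul,
        show (star (A n).det : ℂ) = starRingEnd ℂ ((A n).det) from rfl, Complex.norm_conj]
      ring
    rw [← h1, h2]
  -- the key chain of inequalities
  have hchain : ∀ n, μ n ^ (p - 1) * ‖T n‖ ^ 2 ≤ C ^ 2 := by
    intro n
    have h1 : ‖T n‖ ^ 2 ≤ lam n (i₁ n) :=
      opNorm_sq_le (A n) (hlam0 n (i₁ n)) (fun i => hmax n i (Finset.mem_univ i))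
    have h2 : μ n ^ (p - 1) ≤ ∏ i ∈ Finset.univ.erase (i₁ n), lam n i := by
      have hcard : (Finset.univ.erase (i₁ n)).card = p - 1 := by
        rw [Finset.card_erase_of_mem (Finset.mem_univ _), Finset.card_univ, Fintype.card_fin]
      calc μ n ^ (p - 1) = ∏ _i ∈ Finset.univ.erase (i₁ n), μ n := by
            rw [Finset.prod_const, hcard]
        _ ≤ ∏ i ∈ Finset.univ.erase (i₁ n), lam n i :=
            Finset.prod_le_prod (fun i _ => hμ0 n) (fun i _ => hmin n i (Finset.mem_univ i))
    calc μ n ^ (p - 1) * ‖T n‖ ^ 2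
        ≤ (∏ i ∈ Finset.univ.erase (i₁ n), lam n i) * lam n (i₁ n) := by
          apply mul_le_mul h2 h1 (sq_nonneg _)
          exact Finset.prod_nonneg fun i _ => hlam0 n i
      _ = ∏ i, lam n i := Finset.prod_erase_mul _ _ (Finset.mem_univ _)
      _ = ‖(A n).det‖ ^ 2 := hprod n
      _ ≤ C ^ 2 := by
          have := hC n
          nlinarith [norm_nonneg ((A n).det)]
  have hT2 : Tendsto (fun n => ‖T n‖ ^ 2) atTop atTop :=
    (tendsto_pow_atTop (two_ne_zero)).comp hnorm
  -- μ tends to zero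
  have hμlim : Tendsto μ atTop (nhds 0) := by
    rcases Nat.lt_or_ge 1 p with hp2 | hp1
    · -- p ≥ 2
      have hq : (p - 1 : ℕ) ≠ 0 := by omega
      have hbound : ∀ᶠ n in atTop, μ n ^ (p - 1) ≤ C ^ 2 / ‖T n‖ ^ 2 := by
        filter_upwards [hT2.eventually_ge_atTop 1] with n hn
        rw [le_div_iff₀ (by linarith)]
        exact hchain n
      have h0 : Tendsto (fun n => C ^ 2 / ‖T n‖ ^ 2) atTop (nhds 0) :=
        tendsto_const_nhds.div_atTop hT2
      have hpow : Tendsto (fun n => μ n ^ (p - 1)) atTop (nhds 0) :=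
        squeeze_zero' (Eventually.of_forall fun n => pow_nonneg (hμ0 n) _) hbound h0
      have hcont : ContinuousAt (fun y : ℝ => y ^ (((p - 1 : ℕ) : ℝ)⁻¹)) 0 :=
        Real.continuousAt_rpow_const 0 _ (Or.inr (by positivity))
      have hcomp := hcont.tendsto.comp hpow
      rw [Real.zero_rpow (by positivity)] at hcomp
      refine hcomp.congr fun n => ?_
      show ((μ n ^ (p - 1) : ℝ)) ^ (((p - 1 : ℕ) : ℝ)⁻¹) = μ n
      rw [← Real.rpow_natCast (μ n) (p - 1), ← Real.rpow_mul (hμ0 n),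
        mul_inv_cancel₀ (by exact_mod_cast hq), Real.rpow_one]
    · -- p = 1 : contradiction with the norm blow-up
      exfalso
      obtain ⟨n, hn⟩ := (hT2.eventually_gt_atTop (C ^ 2)).exists
      have hc := hchain n
      rw [show p - 1 = 0 by omega, pow_zero, one_mul] at hc
      linarith
  -- the norms of the images tend to zero
  have hnormu : Tendsto (fun n => ‖T n (u n)‖) atTop (nhds 0) := by
    have heq : (fun n => ‖T n (u n)‖) = fun n => Real.sqrt (μ n) := by
      funext n; rw [← huT n, Real.sqrt_sq (norm_nonneg _)]
    rw [heq]
    have : Tendsto Real.sqrt (nhds 0) (nhds 0) := by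
      simpa using Real.continuous_sqrt.tendsto 0
    exact this.comp hμlim
  -- compactness of the unit sphere
  obtain ⟨w, hw, φ, hφ, hconv⟩ :=
    (isCompact_sphere (0 : EuclideanSpace ℂ (Fin p)) 1).tendsto_subseq
      (x := u) (fun n => by simp [mem_sphere_iff_norm, hu1 n])
  refine ⟨φ, u ∘ φ, w, hφ, fun n => hu1 _, ?_, hconv, ?_⟩
  · simpa [mem_sphere_iff_norm] using hw
  · exact hnormu.comp hφ.tendsto_atTop
end
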